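/- arXiv:2605.17747 — 2 statements merged into one kernel-verified Lean document; each statement's English description precedes it below -/
import Mathlib

section
/- Let (L, ∘_λ, ∗_λ) be a pre-Lie commutative conformal superalgebra which additionally satisfies (a ∘_λ b) ∗_{λ+μ} c = a ∘_λ (b ∗_μ c) for all homogeneous a, b, c ∈ L. Then (L, ∘_λ, ∗_λ) is a pre-Lie Poisson conformal superalgebra, i.e., it also satisfies (a ∗_λ b) ∘_{λ+μ} c − a ∗_λ (b ∘_μ c) = (−1)^{|a||b|}((b ∗_μ a) ∘_{λ+μ} c − b ∗_μ (a ∘_λ c)). -/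
open Polynomial
open scoped TensorProduct

noncomputable section

namespace TPCSAFormal

/-- The super-sign `(-1)^{i·j}` for parities `i, j ∈ ℤ/2ℤ`. -/
def sgn (i j : ZMod 2) : ℂ := (-1 : ℂ) ^ (i.val * j.val)

variable (L : Type*) [AddCommGroup L] [Module ℂ L]
  [Module (Polynomial ℂ) L] [IsScalarTower ℂ (Polynomial ℂ) L]

/-- A conformal `λ`-product on the `ℂ[∂]`-module `L`, recorded by its family of `n`-th
product coefficients: `a ∘_λ b = ∑_n λ^n • coeff n a b`, with finitely many nonzero terms.
This is exactly the data of a `ℂ`-bilinear map `L ⊗ L → ℂ[λ] ⊗ L`. -/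
structure ConformalProduct where
  coeff : ℕ → L →ₗ[ℂ] L →ₗ[ℂ] L
  coeff_finite : ∀ a b : L, ∃ N : ℕ, ∀ n : ℕ, N ≤ n → coeff n a b = 0

variable {L}

/-- The value `a ∘_λ b` of the `λ`-product at `λ ∈ ℂ`.  Since `ℂ` is infinite, identities
between such values for all `λ` are equivalent to the corresponding polynomial identities. -/
def ConformalProduct.mul (m : ConformalProduct L) (lam : ℂ) (a b : L) : L :=
  ∑ᶠ n : ℕ, lam ^ n • m.coeff n a b

/-- The value `a ∘_{-∂-λ} b`, where `∂` acts on `L` as scalar multiplication by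
`X ∈ ℂ[∂]` (the variable `λ` being replaced by the operator `-∂-λ`). -/
def ConformalProduct.cmul (m : ConformalProduct L) (lam : ℂ) (a b : L) : L :=
  ∑ᶠ n : ℕ, ((-((X : Polynomial ℂ) + C lam)) ^ n) • m.coeff n a b

variable (L) in
/-- A `ℤ₂`-grading on `L` making it a `ℤ₂`-graded `ℂ[∂]`-module: `L = L₀ ⊕ L₁` with
`∂ L_i ⊆ L_i`, where `∂` acts as multiplication by `X ∈ ℂ[∂]`. -/
structure SuperModule where
  grade : ZMod 2 → Submodule ℂ L
  isInternal : DirectSum.IsInternal grade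
  X_smul_mem : ∀ (i : ZMod 2) (a : L), a ∈ grade i → (X : Polynomial ℂ) • a ∈ grade i

/-- `m` is an even `λ`-product on the `ℤ₂`-graded `ℂ[∂]`-module `(L, S)`:
it is even with respect to the grading and conformally sesquilinear. -/
structure IsLambdaProduct (S : SuperModule L) (m : ConformalProduct L) : Prop where
  even : ∀ (i j : ZMod 2) (a b : L), a ∈ S.grade i → b ∈ S.grade j →
    ∀ n : ℕ, m.coeff n a b ∈ S.grade (i + j)
  sesq_left : ∀ (lam : ℂ) (a b : L),
    m.mul lam ((X : Polynomial ℂ) • a) b = (-lam) • m.mul lam a b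
  sesq_right : ∀ (lam : ℂ) (a b : L),
    m.mul lam a ((X : Polynomial ℂ) • b) =
      (X : Polynomial ℂ) • m.mul lam a b + lam • m.mul lam a b

/-- `(L, S, m)` is a commutative associative conformal superalgebra. -/
structure IsCommAssoc (S : SuperModule L) (m : ConformalProduct L)
    extends IsLambdaProduct S m : Prop where
  comm : ∀ (i j : ZMod 2) (a b : L), a ∈ S.grade i → b ∈ S.grade j →
    ∀ lam : ℂ, m.mul lam a b = sgn i j • m.cmul lam b a
  assoc : ∀ (lam mu : ℂ) (a b c : L),
    m.mul lam a (m.mul mu b c) = m.mul (lam + mu) (m.mul lam a b) c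

/-- `(L, S, br)` is a Lie conformal superalgebra. -/
structure IsLie (S : SuperModule L) (br : ConformalProduct L)
    extends IsLambdaProduct S br : Prop where
  skew : ∀ (i j : ZMod 2) (a b : L), a ∈ S.grade i → b ∈ S.grade j →
    ∀ lam : ℂ, br.mul lam a b = -(sgn i j • br.cmul lam b a)
  jacobi : ∀ (i j : ZMod 2) (a b : L), a ∈ S.grade i → b ∈ S.grade j →
    ∀ (c : L) (lam mu : ℂ),
      br.mul lam a (br.mul mu b c) =
        br.mul (lam + mu) (br.mul lam a b) c + sgn i j • br.mul mu b (br.mul lam a c)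

/-- `(L, S, m, br)` is a transposed Poisson conformal superalgebra. -/
structure IsTPCSA (S : SuperModule L) (m br : ConformalProduct L) : Prop where
  commAssoc : IsCommAssoc S m
  lie : IsLie S br
  transposedLeibniz : ∀ (i j : ZMod 2) (a b : L), a ∈ S.grade i → b ∈ S.grade j →
    ∀ (c : L) (lam mu : ℂ),
      (2 : ℂ) • m.mul lam a (br.mul mu b c) =
        br.mul (lam + mu) (m.mul lam a b) c + sgn i j • br.mul mu b (m.mul lam a c)

/-- `(L, S, m, br)` is a Poisson conformal superalgebra. -/
structure IsPCSA (S : SuperModule L) (m br : ConformalProduct L) : Prop where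
  commAssoc : IsCommAssoc S m
  lie : IsLie S br
  leibniz : ∀ (i j : ZMod 2) (a b : L), a ∈ S.grade i → b ∈ S.grade j →
    ∀ (c : L) (lam mu : ℂ),
      br.mul lam a (m.mul mu b c) =
        m.mul (lam + mu) (br.mul lam a b) c + sgn i j • m.mul mu b (br.mul lam a c)

/-- `(L, S, br, α)` is a Hom-Lie conformal superalgebra. -/
structure IsHomLie (S : SuperModule L) (br : ConformalProduct L) (α : L → L)
    extends IsLambdaProduct S br : Prop where
  map_smul_add : ∀ (c : ℂ) (a b : L), α (c • a + b) = c • α a + α b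
  map_grade : ∀ (i : ZMod 2) (a : L), a ∈ S.grade i → α a ∈ S.grade i
  commute_partial : ∀ a : L, α ((X : Polynomial ℂ) • a) = (X : Polynomial ℂ) • α a
  skew : ∀ (i j : ZMod 2) (a b : L), a ∈ S.grade i → b ∈ S.grade j →
    ∀ lam : ℂ, br.mul lam a b = -(sgn i j • br.cmul lam b a)
  homJacobi : ∀ (i j : ZMod 2) (a b : L), a ∈ S.grade i → b ∈ S.grade j →
    ∀ (c : L) (lam mu : ℂ),
      br.mul lam (α a) (br.mul mu b c) =
        br.mul (lam + mu) (br.mul lam a b) (α c) + sgn i j • br.mul mu (α b) (br.mul lam a c)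

/-- `(L, S, p)` is a left-symmetric conformal superalgebra. -/
structure IsLeftSymmetric (S : SuperModule L) (p : ConformalProduct L)
    extends IsLambdaProduct S p : Prop where
  leftSym : ∀ (i j : ZMod 2) (a b : L), a ∈ S.grade i → b ∈ S.grade j →
    ∀ (c : L) (lam mu : ℂ),
      p.mul (lam + mu) (p.mul lam a b) c - p.mul lam a (p.mul mu b c) =
        sgn i j • (p.mul (lam + mu) (p.mul mu b a) c - p.mul mu b (p.mul lam a c))

/-- `(L, S, p)` is a (left) Novikov conformal superalgebra. -/
structure IsNovikov (S : SuperModule L) (p : ConformalProduct L)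
    extends IsLeftSymmetric S p : Prop where
  novikov : ∀ (j k : ZMod 2) (b c : L), b ∈ S.grade j → c ∈ S.grade k →
    ∀ (a : L) (lam mu : ℂ),
      p.mul (lam + mu) (p.mul lam a b) c = sgn j k • p.cmul mu (p.mul lam a c) b

/-- `(L, S, mc, p)` is a Novikov-Poisson conformal superalgebra. -/
structure IsNovikovPoisson (S : SuperModule L) (mc p : ConformalProduct L) : Prop where
  commAssoc : IsCommAssoc S mc
  novikov : IsNovikov S p
  compat₁ : ∀ (lam mu : ℂ) (a b c : L),
    p.mul (lam + mu) (mc.mul lam a b) c = mc.mul lam a (p.mul mu b c)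
  compat₂ : ∀ (i j : ZMod 2) (a b : L), a ∈ S.grade i → b ∈ S.grade j →
    ∀ (c : L) (lam mu : ℂ),
      mc.mul (lam + mu) (p.mul lam a b) c - p.mul lam a (mc.mul mu b c) =
        sgn i j • (mc.mul (lam + mu) (p.mul mu b a) c - p.mul mu b (mc.mul lam a c))

/-- `(L, S, mc, p)` is a pre-Lie commutative conformal superalgebra. -/
structure IsPreLieComm (S : SuperModule L) (mc p : ConformalProduct L) : Prop where
  commAssoc : IsCommAssoc S mc
  leftSymmetric : IsLeftSymmetric S p
  compat : ∀ (i j : ZMod 2) (a b : L), a ∈ S.grade i → b ∈ S.grade j →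
    ∀ (c : L) (lam mu : ℂ),
      p.mul lam a (mc.mul mu b c) =
        mc.mul (lam + mu) (p.mul lam a b) c + sgn i j • mc.mul mu b (p.mul lam a c)

/-- `(L, S, mc, p)` is a pre-Lie Poisson conformal superalgebra. -/
structure IsPreLiePoisson (S : SuperModule L) (mc p : ConformalProduct L) : Prop where
  commAssoc : IsCommAssoc S mc
  leftSymmetric : IsLeftSymmetric S p
  compat₁ : ∀ (lam mu : ℂ) (a b c : L),
    p.mul (lam + mu) (mc.mul lam a b) c = mc.mul lam a (p.mul mu b c)
  compat₂ : ∀ (i j : ZMod 2) (a b : L), a ∈ S.grade i → b ∈ S.grade j →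
    ∀ (c : L) (lam mu : ℂ),
      mc.mul (lam + mu) (p.mul lam a b) c - p.mul lam a (mc.mul mu b c) =
        sgn i j • (mc.mul (lam + mu) (p.mul mu b a) c - p.mul mu b (mc.mul lam a c))


section Aux

set_option linter.unusedSectionVars false in
lemma ConformalProduct.supp_fin {R : Type*} [Zero R] [SMulZeroClass R L]
    (m : ConformalProduct L) (f : ℕ → R) (a b : L) :
    (Function.support fun n => f n • m.coeff n a b).Finite := by
  obtain ⟨N, hN⟩ := m.coeff_finite a b
  apply Set.Finite.subset (Set.finite_Iio N)
  intro n hn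
  simp only [Function.mem_support] at hn
  by_contra h
  exact hn (by rw [hN n (not_lt.mp h), smul_zero])

/-- `x ↦ m.mul ν x c` as a `ℂ`-linear map. -/
def ConformalProduct.mulLeftLM (m : ConformalProduct L) (ν : ℂ) (c : L) : L →ₗ[ℂ] L where
  toFun a := m.mul ν a c
  map_add' a a' := by
    unfold ConformalProduct.mul
    rw [← finsum_add_distrib (m.supp_fin _ a c) (m.supp_fin _ a' c)]
    exact finsum_congr fun n => by rw [map_add, LinearMap.add_apply, smul_add]
  map_smul' r a := by
    unfold ConformalProduct.mul
    simp only [RingHom.id_apply]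
    rw [smul_finsum]
    exact finsum_congr fun n => by rw [map_smul, LinearMap.smul_apply, smul_comm]

lemma ConformalProduct.mulLeftLM_apply (m : ConformalProduct L) (ν : ℂ) (c a : L) :
    m.mulLeftLM ν c a = m.mul ν a c := rfl

lemma ConformalProduct.mul_finsum_left (m : ConformalProduct L) (ν : ℂ) (c : L)
    (f : ℕ → L) (hf : (Function.support f).Finite) :
    m.mul ν (∑ᶠ n, f n) c = ∑ᶠ n, m.mul ν (f n) c := by
  rw [← ConformalProduct.mulLeftLM_apply]
  exact ((m.mulLeftLM ν c).toAddMonoidHom.map_finsum hf)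

lemma mul_poly_smul_left {S : SuperModule L} {p : ConformalProduct L}
    (hp : IsLambdaProduct S p) (ν : ℂ) (q : Polynomial ℂ) (v w : L) :
    p.mul ν (q • v) w = q.eval (-ν) • p.mul ν v w := by
  induction q using Polynomial.induction_on with
  | C r =>
      rw [Polynomial.eval_C]
      have : (Polynomial.C r) • v = r • v := by
        rw [Polynomial.C_eq_algebraMap, algebraMap_smul]
      rw [this, ← ConformalProduct.mulLeftLM_apply, map_smul,
        ConformalProduct.mulLeftLM_apply]
  | add q r hq hr =>
      rw [add_smul, ← ConformalProduct.mulLeftLM_apply, map_add,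
        ConformalProduct.mulLeftLM_apply, ConformalProduct.mulLeftLM_apply, hq, hr,
        Polynomial.eval_add, add_smul]
  | monomial n r ih =>
      have hX : (Polynomial.C r * Polynomial.X ^ (n + 1)) • v =
          (Polynomial.X : Polynomial ℂ) • ((Polynomial.C r * Polynomial.X ^ n) • v) := by
        rw [smul_smul]; ring_nf
      rw [hX, hp.sesq_left, ih, smul_smul]
      congr 1
      simp only [Polynomial.eval_mul, Polynomial.eval_pow, Polynomial.eval_C,
        Polynomial.eval_X]
      ring

/-- Key computation: `(b ∘_{-∂-λ} a) ∗_{λ+μ} c = (b ∘_μ a) ∗_{λ+μ} c`. -/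
lemma cmul_mul_key {S : SuperModule L} {mc p : ConformalProduct L}
    (hp : IsLambdaProduct S p) (lam mu : ℂ) (a b c : L) :
    p.mul (lam + mu) (mc.cmul lam b a) c = p.mul (lam + mu) (mc.mul mu b a) c := by
  have e1 : mc.cmul lam b a =
      ∑ᶠ n, ((-((X : Polynomial ℂ) + C lam)) ^ n) • mc.coeff n b a := rfl
  have e2 : mc.mul mu b a = ∑ᶠ n, mu ^ n • mc.coeff n b a := rfl
  rw [e1, e2, p.mul_finsum_left _ _ _ (mc.supp_fin _ b a),
    p.mul_finsum_left _ _ _ (mc.supp_fin _ b a)]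
  refine finsum_congr fun n => ?_
  have e3 : p.mul (lam + mu) (mu ^ n • mc.coeff n b a) c
      = mu ^ n • p.mul (lam + mu) (mc.coeff n b a) c := by
    rw [← ConformalProduct.mulLeftLM_apply, map_smul, ConformalProduct.mulLeftLM_apply]
  rw [mul_poly_smul_left hp, e3]
  congr 1
  simp only [Polynomial.eval_pow, Polynomial.eval_neg, Polynomial.eval_add,
    Polynomial.eval_X, Polynomial.eval_C]
  ring

lemma sgn_comm (i j : ZMod 2) : sgn i j = sgn j i := by
  unfold sgn; rw [Nat.mul_comm]

lemma sgn_mul_self (i j : ZMod 2) : sgn i j * sgn i j = 1 := by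
  unfold sgn
  rw [← pow_add, ← two_mul, pow_mul]
  norm_num

end Aux

/-- a pre-Lie commutative conformal superalgebra satisfying
`(a ∘_λ b) ∗_{λ+μ} c = a ∘_λ (b ∗_μ c)` is a pre-Lie Poisson conformal superalgebra. -/
theorem statement_14 (S : SuperModule L) (mc p : ConformalProduct L)
    (hPLC : IsPreLieComm S mc p)
    (hcompat : ∀ (lam mu : ℂ) (a b c : L),
      p.mul (lam + mu) (mc.mul lam a b) c = mc.mul lam a (p.mul mu b c)) :
    IsPreLiePoisson S mc p := by
  refine ⟨hPLC.commAssoc, hPLC.leftSymmetric, hcompat, ?_⟩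
  intro i j a b ha hb c lam mu
  set s := sgn i j with hs
  -- key identity: a ∘_λ (b ∗_μ c) = s • (b ∘_μ (a ∗_λ c))
  have key : mc.mul lam a (p.mul mu b c) = s • mc.mul mu b (p.mul lam a c) := by
    calc mc.mul lam a (p.mul mu b c)
        = p.mul (lam + mu) (mc.mul lam a b) c := (hcompat lam mu a b c).symm
      _ = p.mul (lam + mu) (s • mc.cmul lam b a) c := by
          rw [hPLC.commAssoc.comm i j a b ha hb lam]
      _ = s • p.mul (lam + mu) (mc.cmul lam b a) c := by
          rw [← ConformalProduct.mulLeftLM_apply, map_smul,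
            ConformalProduct.mulLeftLM_apply]
      _ = s • p.mul (lam + mu) (mc.mul mu b a) c := by
          rw [cmul_mul_key hPLC.leftSymmetric.toIsLambdaProduct]
      _ = s • mc.mul mu b (p.mul lam a c) := by
          rw [add_comm lam mu, hcompat mu lam b a c]
  have h1 := hPLC.compat i j a b ha hb c lam mu
  have h2 := hPLC.compat j i b a hb ha c mu lam
  rw [← sgn_comm i j, ← hs] at h2
  rw [h1, h2, key, add_comm mu lam]
  have hss : s * s = 1 := sgn_mul_self i j
  rw [smul_sub]
  rw [show ∀ X Y : L, X - (X + Y) = -Y from fun X Y => by abel,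
    show ∀ X Y : L, s • X - s • (X + Y) = -(s • Y) from fun X Y => by
      rw [smul_add]; abel]
  rw [smul_smul, smul_smul, hss, one_mul, hs]
end TPCSAFormal
end
end

section
/- Let R = ℂ[∂]x ⊕ ℂ[∂]y be the free ℤ₂-graded ℂ[∂]-module of rank (1+1) with x even and y odd, equipped with the Lie conformal superalgebra structure [x_λ x] = (∂ + 2λ)x, [x_λ y] = (∂ + (3/2)λ)y, [y_λ y] = α x, where α ∈ ℂ. Then the only compatible transposed Poisson conformal superalgebra structure on R is the trivial one: every even λ-product ∘_λ making (R, ∘_λ, [·_λ ·]) a transposed Poisson conformal superalgebra satisfies x ∘_λ x = x ∘_λ y = y ∘_λ y = 0. -/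
open Polynomial
open scoped TensorProduct

noncomputable section

namespace TPCSAFormal

variable (L : Type*) [AddCommGroup L] [Module ℂ L]
  [Module (Polynomial ℂ) L] [IsScalarTower ℂ (Polynomial ℂ) L]

variable {L}

/-- The even generator `x` of the free rank (1+1) `ℂ[∂]`-module `R = ℂ[∂]x ⊕ ℂ[∂]y`. -/
def xGen : Polynomial ℂ × Polynomial ℂ := (1, 0)

/-- The odd generator `y` of the free rank (1+1) `ℂ[∂]`-module `R = ℂ[∂]x ⊕ ℂ[∂]y`. -/
def yGen : Polynomial ℂ × Polynomial ℂ := (0, 1)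

set_option linter.unusedSectionVars false

namespace ConformalProduct
variable (m : ConformalProduct L)

lemma mul_eq_sum (lam : ℂ) (a b : L) {N : ℕ} (hN : ∀ n, N ≤ n → m.coeff n a b = 0) :
    m.mul lam a b = ∑ n ∈ Finset.range N, lam ^ n • m.coeff n a b := by
  refine finsum_eq_sum_of_support_subset _ ?_
  intro n hn
  simp only [Function.mem_support] at hn
  by_contra h
  simp only [Finset.coe_range, Set.mem_Iio, not_lt] at h
  exact hn (by rw [hN n h, smul_zero])

lemma mul_add_right (lam : ℂ) (a u v : L) :
    m.mul lam a (u + v) = m.mul lam a u + m.mul lam a v := by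
  obtain ⟨N₁, h₁⟩ := m.coeff_finite a u
  obtain ⟨N₂, h₂⟩ := m.coeff_finite a v
  rw [m.mul_eq_sum lam a (u + v)
      (N := max N₁ N₂)
      (fun n hn => by
        rw [map_add, h₁ n (le_trans (le_max_left _ _) hn),
          h₂ n (le_trans (le_max_right _ _) hn), add_zero]),
    m.mul_eq_sum lam a u (N := max N₁ N₂) (fun n hn => h₁ n (le_trans (le_max_left _ _) hn)),
    m.mul_eq_sum lam a v (N := max N₁ N₂) (fun n hn => h₂ n (le_trans (le_max_right _ _) hn)),
    ← Finset.sum_add_distrib]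
  exact Finset.sum_congr rfl fun n _ => by rw [map_add, smul_add]

lemma mul_add_left (lam : ℂ) (u v b : L) :
    m.mul lam (u + v) b = m.mul lam u b + m.mul lam v b := by
  obtain ⟨N₁, h₁⟩ := m.coeff_finite u b
  obtain ⟨N₂, h₂⟩ := m.coeff_finite v b
  have key : ∀ n : ℕ, m.coeff n (u + v) b = m.coeff n u b + m.coeff n v b := fun n => by
    rw [map_add, LinearMap.add_apply]
  rw [m.mul_eq_sum lam (u + v) b (N := max N₁ N₂)
      (fun n hn => by
        rw [key, h₁ n (le_trans (le_max_left _ _) hn),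
          h₂ n (le_trans (le_max_right _ _) hn), add_zero]),
    m.mul_eq_sum lam u b (N := max N₁ N₂) (fun n hn => h₁ n (le_trans (le_max_left _ _) hn)),
    m.mul_eq_sum lam v b (N := max N₁ N₂) (fun n hn => h₂ n (le_trans (le_max_right _ _) hn)),
    ← Finset.sum_add_distrib]
  exact Finset.sum_congr rfl fun n _ => by rw [key, smul_add]

lemma mul_smulC_right (lam : ℂ) (c : ℂ) (a u : L) :
    m.mul lam a (c • u) = c • m.mul lam a u := by
  obtain ⟨N, h⟩ := m.coeff_finite a u
  rw [m.mul_eq_sum lam a (c • u) (N := N) (fun n hn => by rw [map_smul, h n hn, smul_zero]),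
    m.mul_eq_sum lam a u (N := N) h, Finset.smul_sum]
  exact Finset.sum_congr rfl fun n _ => by rw [map_smul, smul_comm]

lemma mul_smulC_left (lam : ℂ) (c : ℂ) (u b : L) :
    m.mul lam (c • u) b = c • m.mul lam u b := by
  obtain ⟨N, h⟩ := m.coeff_finite u b
  have key : ∀ n : ℕ, m.coeff n (c • u) b = c • m.coeff n u b := fun n => by
    rw [map_smul, LinearMap.smul_apply]
  rw [m.mul_eq_sum lam (c • u) b (N := N) (fun n hn => by rw [key, h n hn, smul_zero]),
    m.mul_eq_sum lam u b (N := N) h, Finset.smul_sum]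
  exact Finset.sum_congr rfl fun n _ => by rw [key, smul_comm]

lemma mul_zero_left (lam : ℂ) (b : L) : m.mul lam 0 b = 0 := by
  have := m.mul_smulC_left lam 0 0 b
  simpa using this

lemma mul_eq_zero_of_coeff {a b : L} (h : ∀ n, m.coeff n a b = 0) (lam : ℂ) :
    m.mul lam a b = 0 := by
  unfold ConformalProduct.mul
  simp [h]

lemma cmul_eq_zero_of_coeff {a b : L} (h : ∀ n, m.coeff n a b = 0) (lam : ℂ) :
    m.cmul lam a b = 0 := by
  unfold ConformalProduct.cmul
  simp [h]

lemma mul_pow_smul_left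
    (hsl : ∀ (lam : ℂ) (a b : L), m.mul lam ((X : Polynomial ℂ) • a) b = (-lam) • m.mul lam a b)
    (lam : ℂ) (a b : L) (k : ℕ) :
    m.mul lam (((X : Polynomial ℂ) ^ k) • a) b = ((-lam) ^ k) • m.mul lam a b := by
  induction k with
  | zero => simp
  | succ k ih =>
    rw [pow_succ, pow_succ, mul_comm ((X : Polynomial ℂ) ^ k), mul_smul, hsl,
      ih, mul_comm ((-lam) ^ k), mul_smul]

lemma smulC_poly (c : ℂ) (w : L) : (C c : Polynomial ℂ) • w = c • w := by
  rw [show (C c : Polynomial ℂ) = algebraMap ℂ (Polynomial ℂ) c from rfl, algebraMap_smul]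

lemma mul_poly_smul_left
    (hsl : ∀ (lam : ℂ) (a b : L), m.mul lam ((X : Polynomial ℂ) • a) b = (-lam) • m.mul lam a b)
    (lam : ℂ) (p : Polynomial ℂ) (a b : L) :
    m.mul lam (p • a) b = (p.eval (-lam)) • m.mul lam a b := by
  induction p using Polynomial.induction_on' with
  | add p q hp hq => rw [add_smul, m.mul_add_left, hp, hq, eval_add, add_smul]
  | monomial n c =>
    rw [← C_mul_X_pow_eq_monomial, mul_smul, smulC_poly, m.mul_smulC_left,
      m.mul_pow_smul_left hsl, eval_mul, eval_C, eval_pow, eval_X, smul_smul, mul_smul]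

lemma mul_X_smul_right
    (hsr : ∀ (lam : ℂ) (a b : L), m.mul lam a ((X : Polynomial ℂ) • b) =
      (X : Polynomial ℂ) • m.mul lam a b + lam • m.mul lam a b)
    (lam : ℂ) (a b : L) :
    m.mul lam a ((X : Polynomial ℂ) • b) = ((X : Polynomial ℂ) + C lam) • m.mul lam a b := by
  rw [hsr, add_smul, smulC_poly]

lemma mul_pow_smul_right
    (hsr : ∀ (lam : ℂ) (a b : L), m.mul lam a ((X : Polynomial ℂ) • b) =
      (X : Polynomial ℂ) • m.mul lam a b + lam • m.mul lam a b)
    (lam : ℂ) (a b : L) (k : ℕ) :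
    m.mul lam a (((X : Polynomial ℂ) ^ k) • b) =
      (((X : Polynomial ℂ) + C lam) ^ k) • m.mul lam a b := by
  induction k with
  | zero => simp
  | succ k ih =>
    rw [pow_succ, mul_comm, mul_smul, m.mul_X_smul_right hsr, ih, ← mul_smul, ← pow_succ']

lemma mul_poly_smul_right
    (hsr : ∀ (lam : ℂ) (a b : L), m.mul lam a ((X : Polynomial ℂ) • b) =
      (X : Polynomial ℂ) • m.mul lam a b + lam • m.mul lam a b)
    (lam : ℂ) (p : Polynomial ℂ) (a b : L) :
    m.mul lam a (p • b) = (p.comp ((X : Polynomial ℂ) + C lam)) • m.mul lam a b := by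
  induction p using Polynomial.induction_on' with
  | add p q hp hq => rw [add_smul, m.mul_add_right, hp, hq, add_comp, add_smul]
  | monomial n c =>
    rw [← C_mul_X_pow_eq_monomial, mul_smul, smulC_poly, m.mul_smulC_right,
      m.mul_pow_smul_right hsr, mul_comp, C_comp, pow_comp, X_comp, mul_smul, smulC_poly]

end ConformalProduct

lemma poly_vanish {N : ℕ} (c : ℕ → ℂ)
    (h : ∀ lam : ℂ, lam ≠ 0 → ∑ n ∈ Finset.range N, lam ^ n * c n = 0) :
    ∀ k, k < N → c k = 0 := by
  intro k hk
  set q : Polynomial ℂ := ∑ n ∈ Finset.range N, C (c n) * X ^ n with hq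
  have hinf : ({z : ℂ | z ≠ 0}).Infinite := by
    have h1 : ({0}ᶜ : Set ℂ).Infinite := (Set.finite_singleton (0 : ℂ)).infinite_compl
    have h2 : {z : ℂ | z ≠ 0} = ({0} : Set ℂ)ᶜ := by ext z; simp
    rwa [h2]
  have hq0 : q = 0 := by
    apply Polynomial.eq_zero_of_infinite_isRoot
    refine hinf.mono ?_
    intro z hz
    have hz' := h z hz
    simp only [Set.mem_setOf_eq, IsRoot, hq, eval_finset_sum, eval_mul, eval_C, eval_pow, eval_X]
    calc ∑ n ∈ Finset.range N, c n * z ^ n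
        = ∑ n ∈ Finset.range N, z ^ n * c n := by
          exact Finset.sum_congr rfl fun n _ => mul_comm _ _
      _ = 0 := hz'
  have hck : q.coeff k = c k := by
    rw [hq, finset_sum_coeff]
    simp only [coeff_C_mul, coeff_X_pow, mul_ite, mul_one, mul_zero]
    rw [Finset.sum_ite_eq]
    simp [hk]
  rw [hq0, coeff_zero] at hck
  exact hck.symm

lemma coeff_eq_zero_of_mul_eq_zero (m : ConformalProduct (Polynomial ℂ × Polynomial ℂ))
    (a b : Polynomial ℂ × Polynomial ℂ)
    (h : ∀ lam : ℂ, lam ≠ 0 → m.mul lam a b = 0) : ∀ n, m.coeff n a b = 0 := by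
  obtain ⟨N, hN⟩ := m.coeff_finite a b
  have main : ∀ (φ : (Polynomial ℂ × Polynomial ℂ) →ₗ[ℂ] ℂ) (n : ℕ), φ (m.coeff n a b) = 0 := by
    intro φ n
    by_cases hn : N ≤ n
    · rw [hN n hn, map_zero]
    · push_neg at hn
      refine poly_vanish (fun j => φ (m.coeff j a b)) ?_ n hn
      intro lam hlam
      have h0 := h lam hlam
      rw [m.mul_eq_sum lam a b hN] at h0
      calc ∑ j ∈ Finset.range N, lam ^ j * φ (m.coeff j a b)
          = φ (∑ j ∈ Finset.range N, lam ^ j • m.coeff j a b) := by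
            rw [map_sum]
            exact Finset.sum_congr rfl fun j _ => by rw [map_smul, smul_eq_mul]
        _ = 0 := by rw [h0, map_zero]
  intro n
  have h1 : (m.coeff n a b).1 = 0 := by
    ext k
    simpa using main ((lcoeff ℂ k).comp (LinearMap.fst ℂ (Polynomial ℂ) (Polynomial ℂ))) n
  have h2 : (m.coeff n a b).2 = 0 := by
    ext k
    simpa using main ((lcoeff ℂ k).comp (LinearMap.snd ℂ (Polynomial ℂ) (Polynomial ℂ))) n
  exact Prod.ext h1 h2


/-- the Lie conformal superalgebra `R₅`: `[x_λ x] = (∂+2λ)x`,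
`[x_λ y] = (∂+(3/2)λ)y`, `[y_λ y] = αx` admits only the trivial compatible TPCSA
structure. -/
theorem statement_19 (S : SuperModule (Polynomial ℂ × Polynomial ℂ))
    (hS0 : S.grade 0 = LinearMap.ker (LinearMap.snd ℂ (Polynomial ℂ) (Polynomial ℂ)))
    (hS1 : S.grade 1 = LinearMap.ker (LinearMap.fst ℂ (Polynomial ℂ) (Polynomial ℂ)))
    (α : ℂ)
    (br : ConformalProduct (Polynomial ℂ × Polynomial ℂ)) (hbr : IsLie S br)
    (hxx : ∀ lam : ℂ, br.mul lam xGen xGen = ((X : Polynomial ℂ) + C (2 * lam)) • xGen)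
    (hxy : ∀ lam : ℂ, br.mul lam xGen yGen = ((X : Polynomial ℂ) + C ((3 / 2) * lam)) • yGen)
    (hyy : ∀ lam : ℂ, br.mul lam yGen yGen = α • xGen)
    (m : ConformalProduct (Polynomial ℂ × Polynomial ℂ)) (hm : IsLambdaProduct S m)
    (hT : IsTPCSA S m br) :
    ∀ lam : ℂ, m.mul lam xGen xGen = 0 ∧ m.mul lam xGen yGen = 0 ∧
      m.mul lam yGen yGen = 0 := by
  classical
  -- grading facts
  have hxg : xGen ∈ S.grade 0 := by rw [hS0]; exact LinearMap.mem_ker.2 rfl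
  have hyg : yGen ∈ S.grade 1 := by rw [hS1]; exact LinearMap.mem_ker.2 rfl
  have hsnd : ∀ v : Polynomial ℂ × Polynomial ℂ, v ∈ S.grade 0 → v.2 = 0 := by
    intro v hv; rw [hS0] at hv; exact LinearMap.mem_ker.1 hv
  have hfst : ∀ v : Polynomial ℂ × Polynomial ℂ, v ∈ S.grade 1 → v.1 = 0 := by
    intro v hv; rw [hS1] at hv; exact LinearMap.mem_ker.1 hv
  have hmem : ∀ (i j : ZMod 2) (a b : Polynomial ℂ × Polynomial ℂ),
      a ∈ S.grade i → b ∈ S.grade j → ∀ lam : ℂ, m.mul lam a b ∈ S.grade (i + j) := by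
    intro i j a b ha hb lam
    obtain ⟨N, hN⟩ := m.coeff_finite a b
    rw [m.mul_eq_sum lam a b hN]
    exact Submodule.sum_mem _ fun n _ => Submodule.smul_mem _ _ (hm.even i j a b ha hb n)
  have pxG : ∀ p : Polynomial ℂ, p • xGen = (p, 0) := fun p => by
    simp [xGen, Prod.smul_mk, smul_eq_mul]
  have pyG : ∀ p : Polynomial ℂ, p • yGen = (0, p) := fun p => by
    simp [yGen, Prod.smul_mk, smul_eq_mul]
  have g00 : (0 : ZMod 2) + 0 = 0 := by decide
  have g01 : (0 : ZMod 2) + 1 = 1 := by decide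
  have g11 : (1 : ZMod 2) + 1 = 0 := by decide
  have g10 : (1 : ZMod 2) + 0 = 1 := by decide
  have hAx : ∀ lam : ℂ, m.mul lam xGen xGen = (m.mul lam xGen xGen).1 • xGen := by
    intro lam
    have h2 := hsnd _ (g00 ▸ hmem 0 0 xGen xGen hxg hxg lam)
    rw [pxG]
    exact Prod.ext rfl h2
  have hBy : ∀ lam : ℂ, m.mul lam xGen yGen = (m.mul lam xGen yGen).2 • yGen := by
    intro lam
    have h1 := hfst _ (g01 ▸ hmem 0 1 xGen yGen hxg hyg lam)
    rw [pyG]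
    exact Prod.ext h1 rfl
  have hDx : ∀ lam : ℂ, m.mul lam yGen yGen = (m.mul lam yGen yGen).1 • xGen := by
    intro lam
    have h2 := hsnd _ (g11 ▸ hmem 1 1 yGen yGen hyg hyg lam)
    rw [pxG]
    exact Prod.ext rfl h2
  have brL := br.mul_poly_smul_left hbr.sesq_left
  have brR := br.mul_poly_smul_right hbr.sesq_right
  have sgn00 : sgn 0 0 = 1 := by simp [sgn]
  have sgn10 : sgn 1 0 = 1 := by simp [sgn]
  have e1 : br.mul 0 xGen xGen = (X : Polynomial ℂ) • xGen := by
    rw [hxx]; norm_num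
  have e2 : br.mul 0 xGen yGen = (X : Polynomial ℂ) • yGen := by
    rw [hxy]; norm_num
  -- Step 1: for lam ≠ 0, x∘x = 0 and x∘y = 0.
  have key : ∀ lam : ℂ, lam ≠ 0 → m.mul lam xGen xGen = 0 ∧ m.mul lam xGen yGen = 0 := by
    intro lam hlam
    set A : Polynomial ℂ := (m.mul lam xGen xGen).1 with hA
    set B : Polynomial ℂ := (m.mul lam xGen yGen).2 with hB
    set a₀ : ℂ := A.eval (-lam) with ha₀
    -- Identity I: a = b = c = x, mu = 0
    have leiI := hT.transposedLeibniz 0 0 xGen xGen hxg hxg xGen lam 0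
    rw [e1, hm.sesq_right, hAx lam, ← hA, brL, brR, e1, hxx (lam + 0), sgn00, one_smul] at leiI
    have I1 := congrArg Prod.fst leiI
    simp only [add_zero, comp_X, C_0, Prod.fst_add, Prod.smul_fst, pxG, smul_eq_mul, mul_one,
      ← ha₀, map_mul, map_ofNat] at I1
    simp only [Polynomial.smul_eq_C_mul, map_ofNat] at I1
    have keyI : ((X : Polynomial ℂ) + 2 * C lam) * (A - C a₀) = 0 := by
      linear_combination I1
    have hAconst : A = C a₀ := by
      have hne : ((X : Polynomial ℂ) + 2 * C lam) ≠ 0 := by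
        have := Polynomial.X_add_C_ne_zero (2 * lam) (R := ℂ)
        rw [map_mul, map_ofNat] at this
        exact this
      rcases mul_eq_zero.mp keyI with h | h
      · exact absurd h hne
      · exact sub_eq_zero.mp h
    -- Identity II: a = b = x, c = y, mu = 0
    have leiII := hT.transposedLeibniz 0 0 xGen xGen hxg hxg yGen lam 0
    rw [e2, hm.sesq_right, hAx lam, ← hA, hBy lam, ← hB, hAconst, brL, brR, e2,
      hxy (lam + 0), sgn00, one_smul, eval_C] at leiII
    have II1 := congrArg Prod.snd leiII
    simp only [add_zero, comp_X, C_0, Prod.snd_add, Prod.smul_snd, pyG, smul_eq_mul, mul_one] at II1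
    simp only [Polynomial.smul_eq_C_mul, map_ofNat] at II1
    have keyII : ((X : Polynomial ℂ) + 2 * C lam) * B = C a₀ * ((X : Polynomial ℂ) + C (3 / 2 * lam)) := by
      linear_combination II1
    have ha00 : a₀ = 0 := by
      have ev := congrArg (Polynomial.eval (-(2 * lam))) keyII
      simp only [eval_mul, eval_add, eval_X, eval_C, eval_ofNat] at ev
      have hzero : (-(2 * lam) + 2 * lam) = 0 := by ring
      rw [hzero, zero_mul] at ev
      have hne2 : (-(2 * lam) + 3 / 2 * lam) ≠ 0 := by
        intro hc
        apply hlam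
        have : (-(1 / 2) : ℂ) * lam = 0 := by linear_combination hc
        rcases mul_eq_zero.mp this with h | h
        · norm_num at h
        · exact h
      rcases mul_eq_zero.mp ev.symm with h | h
      · exact h
      · exact absurd h hne2
    have hB0 : B = 0 := by
      rw [ha00, map_zero, zero_mul] at keyII
      have hne : ((X : Polynomial ℂ) + 2 * C lam) ≠ 0 := by
        have := Polynomial.X_add_C_ne_zero (2 * lam) (R := ℂ)
        rw [map_mul, map_ofNat] at this
        exact this
      rcases mul_eq_zero.mp keyII with h | h
      · exact absurd h hne
      · exact h
    constructor
    · rw [hAx lam, ← hA, hAconst, ha00, map_zero, zero_smul]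
    · rw [hBy lam, ← hB, hB0, zero_smul]
  -- Step 2: all coefficients of x∘x and x∘y vanish
  have cxx : ∀ n, m.coeff n xGen xGen = 0 :=
    coeff_eq_zero_of_mul_eq_zero m xGen xGen (fun lam hl => (key lam hl).1)
  have cxy : ∀ n, m.coeff n xGen yGen = 0 :=
    coeff_eq_zero_of_mul_eq_zero m xGen yGen (fun lam hl => (key lam hl).2)
  -- Step 3: y∘x = 0 by supercommutativity
  have mulyx : ∀ lam : ℂ, m.mul lam yGen xGen = 0 := by
    intro lam
    rw [hT.commAssoc.comm 1 0 yGen xGen hyg hxg lam, m.cmul_eq_zero_of_coeff cxy, smul_zero]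
  -- Step 4: y∘y = 0
  have yy0 : ∀ lam : ℂ, m.mul lam yGen yGen = 0 := by
    intro lam
    set D : Polynomial ℂ := (m.mul lam yGen yGen).1 with hD
    have leiIV := hT.transposedLeibniz 1 0 yGen xGen hyg hxg yGen lam 0
    rw [e2, hm.sesq_right, hDx lam, ← hD, mulyx lam, br.mul_zero_left, zero_add,
      brR, e1, sgn10, one_smul] at leiIV
    have IV1 := congrArg Prod.fst leiIV
    simp only [add_zero, comp_X, C_0, Prod.fst_add, Prod.smul_fst, pxG, pyG, smul_eq_mul,
      mul_one, mul_zero] at IV1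
    simp only [Polynomial.smul_eq_C_mul, map_ofNat] at IV1
    have keyIV : ((X : Polynomial ℂ) + 2 * C lam) * D = 0 := by
      linear_combination IV1
    have hD0 : D = 0 := by
      have hne : ((X : Polynomial ℂ) + 2 * C lam) ≠ 0 := by
        have := Polynomial.X_add_C_ne_zero (2 * lam) (R := ℂ)
        rw [map_mul, map_ofNat] at this
        exact this
      rcases mul_eq_zero.mp keyIV with h | h
      · exact absurd h hne
      · exact h
    rw [hDx lam, ← hD, hD0, zero_smul]
  intro lam
  exact ⟨m.mul_eq_zero_of_coeff cxx lam, m.mul_eq_zero_of_coeff cxy lam, yy0 lam⟩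
end TPCSAFormal
end
end
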